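/- Let H ≤ Sym_n be a permutation group and A ⊆ {1,…,n} an orbit of H with |A| ≥ 5. Let H^A ≤ Sym(A) denote the restriction of H to A, and suppose Alt(A) ≤ H^A. Then at least one of the following holds: (1) the restriction to A of the pointwise stabilizer in H of the complement {1,…,n}∖A contains Alt(A); or (2) any two elements of H that agree on {1,…,n}∖A also agree on A (i.e., the action on the complement determines the action on A). -/

import Mathlib

open Equiv Equiv.Perm Finset

private lemma inv_apply_of_eq {α : Type*} {σ : Equiv.Perm α} {x y : α} (h : σ x = y) : σ⁻¹ y = x := by
  rw [Equiv.Perm.inv_eq_iff_eq]; exact h.symm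

private lemma Equiv.Perm.inv_apply_self {α : Type*} (σ : Equiv.Perm α) (x : α) :
    σ⁻¹ (σ x) = x := Equiv.symm_apply_apply σ x

private lemma Equiv.Perm.apply_inv_self {α : Type*} (σ : Equiv.Perm α) (x : α) :
    σ (σ⁻¹ x) = x := Equiv.apply_symm_apply σ x

private lemma psi_apply {α : Type*} {σ π : Equiv.Perm α}
    {x x' y y' : α} (h1 : π x' = x) (h2 : σ x' = y) (h3 : π y = y') :
    (σ⁻¹ * (π * σ * π⁻¹)) x = σ⁻¹ y' := by
  have hinv : π⁻¹ x = x' := inv_apply_of_eq h1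
  simp [Equiv.Perm.mul_apply, hinv, h2, h3]

private lemma cyc_left {α : Type*} [DecidableEq α] {c d e : α}
    (hdc : d ≠ c) (hde : d ≠ e) : (Equiv.swap c e * Equiv.swap c d) c = d := by
  rw [Equiv.Perm.mul_apply, Equiv.swap_apply_left, Equiv.swap_apply_of_ne_of_ne hdc hde]

private lemma cyc_right {α : Type*} [DecidableEq α] {c d e : α}
    (hec : e ≠ c) (hed : e ≠ d) : (Equiv.swap c e * Equiv.swap c d) e = c := by
  rw [Equiv.Perm.mul_apply, Equiv.swap_apply_of_ne_of_ne hec hed, Equiv.swap_apply_right]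

private lemma cyc_fix {α : Type*} [DecidableEq α] {c d e x : α}
    (hxc : x ≠ c) (hxd : x ≠ d) (hxe : x ≠ e) :
    (Equiv.swap c e * Equiv.swap c d) x = x := by
  rw [Equiv.Perm.mul_apply, Equiv.swap_apply_of_ne_of_ne hxc hxd,
    Equiv.swap_apply_of_ne_of_ne hxc hxe]

private lemma cyc_sign {α : Type*} [Fintype α] [DecidableEq α] {c d e : α}
    (hce : c ≠ e) (hcd : c ≠ d) :
    Equiv.Perm.sign (Equiv.swap c e * Equiv.swap c d) = 1 := by
  rw [map_mul, Equiv.Perm.sign_swap hce, Equiv.Perm.sign_swap hcd]; decide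

private lemma step_lemma {α : Type*} [Fintype α] [DecidableEq α]
    (h5 : 5 ≤ Fintype.card α) (K : Subgroup (Equiv.Perm α))
    (hK : ∀ g ∈ K, ∀ h : Equiv.Perm α, Equiv.Perm.sign h = 1 → h * g * h⁻¹ ∈ K) :
    ∀ m : ℕ, ∀ σ : Equiv.Perm α, σ ∈ K → Equiv.Perm.sign σ = 1 → σ ≠ 1 →
      σ.support.card ≤ m → ∃ t ∈ K, t.IsThreeCycle := by
  intro m
  induction m with
  | zero =>
    intro σ _ _ hne hc
    exact absurd (Equiv.Perm.card_support_le_one.1 (by omega)) hne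
  | succ m ih =>
    intro σ hσK hσs hσne hσc
    have h2 : 1 < σ.support.card := Equiv.Perm.one_lt_card_support_of_ne_one hσne
    by_cases hc2 : σ.support.card = 2
    · obtain ⟨x, y, hxy, rfl⟩ := Equiv.Perm.card_support_eq_two.1 hc2
      rw [Equiv.Perm.sign_swap hxy] at hσs
      exact absurd hσs (by decide)
    by_cases hc3 : σ.support.card = 3
    · exact ⟨σ, hσK, card_support_eq_three_iff.1 hc3⟩
    have h4 : 4 ≤ σ.support.card := by omega
    by_cases hinv : ∀ x, σ (σ x) = x
    · -- involution case
      obtain ⟨a, ha⟩ := Finset.card_pos.1 (by omega : 0 < σ.support.card)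
      have haσ : σ a ≠ a := Equiv.Perm.mem_support.1 ha
      set b := σ a with hb
      have hba : σ b = a := by rw [hb]; exact hinv a
      have hab : a ≠ b := fun h => haσ h.symm
      have hbmem : b ∈ σ.support := Equiv.Perm.mem_support.2 (by rw [hba]; exact hab)
      have hcard_ab : ({a, b} : Finset α).card ≤ 2 := (card_insert_le _ _).trans (by simp)
      have hsd : 1 ≤ (σ.support \ {a, b}).card := by
        have := Finset.le_card_sdiff ({a, b} : Finset α) σ.support
        omega
      obtain ⟨c, hc⟩ := Finset.card_pos.1 hsd
      rw [Finset.mem_sdiff] at hc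
      have hcmem : c ∈ σ.support := hc.1
      have hca : c ≠ a := fun h => hc.2 (by simp [h])
      have hcb : c ≠ b := fun h => hc.2 (by simp [h])
      have hcσ : σ c ≠ c := Equiv.Perm.mem_support.1 hcmem
      set d := σ c with hd
      have hdc' : σ d = c := by rw [hd]; exact hinv c
      have hdc : d ≠ c := hcσ
      have hda : d ≠ a := fun h => hcb (σ.injective ((hd.symm.trans h).trans hba.symm))
      have hdb : d ≠ b := fun h => hca (σ.injective ((hd.symm.trans h).trans hb))
      have hdmem : d ∈ σ.support := Equiv.Perm.mem_support.2 (by rw [hdc']; exact hdc.symm)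
      have hcard4 : ({a, b, c, d} : Finset α).card ≤ 4 := by
        have t1 := card_insert_le a ({b, c, d} : Finset α)
        have t2 := card_insert_le b ({c, d} : Finset α)
        have t3 := card_insert_le c ({d} : Finset α)
        simp only [card_singleton] at t1 t2 t3
        omega
      have he1 : 1 ≤ ((univ : Finset α) \ {a, b, c, d}).card := by
        have := Finset.card_sdiff_of_subset (Finset.subset_univ ({a, b, c, d} : Finset α))
        rw [Finset.card_univ] at this
        omega
      obtain ⟨e, he⟩ := Finset.card_pos.1 he1
      rw [Finset.mem_sdiff] at he
      have hea : e ≠ a := fun h => he.2 (by simp [h])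
      have heb : e ≠ b := fun h => he.2 (by simp [h])
      have hec : e ≠ c := fun h => he.2 (by simp [h])
      have hed : e ≠ d := fun h => he.2 (by simp [h])
      set π := Equiv.swap c e * Equiv.swap c d with hπ
      have hπs : Equiv.Perm.sign π = 1 := by rw [hπ]; exact cyc_sign (fun h => hec h.symm) (fun h => hdc h.symm)
      set ψ := σ⁻¹ * (π * σ * π⁻¹) with hψ
      have hψK : ψ ∈ K := mul_mem (inv_mem hσK) (hK σ hσK π hπs)
      have hψs : Equiv.Perm.sign ψ = 1 := by
        rw [hψ]; simp [map_mul, map_inv, hσs, hπs]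
      have hψc : ψ c ≠ c := by
        by_cases hσe : σ e = e
        · have h1 : ψ c = σ⁻¹ c := by
            rw [hψ, hπ, psi_apply (cyc_right hec hed) hσe (cyc_right hec hed)]
          rw [h1, inv_apply_of_eq hdc']
          exact hdc
        · have hσec : σ e ≠ c := fun h => hed (σ.injective (h.trans hdc'.symm))
          have hσed : σ e ≠ d := fun h => hec (σ.injective (h.trans hd))
          have h1 : ψ c = σ⁻¹ (σ e) := by
            rw [hψ, hπ, psi_apply (cyc_right hec hed) rfl (cyc_fix hσec hσed hσe)]
          rw [h1, Equiv.Perm.inv_apply_self]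
          exact hec
      have hψne : ψ ≠ 1 := fun h => hψc (by rw [h]; rfl)
      have hψa : ψ a = a := by
        rw [hψ, hπ, psi_apply (cyc_fix hca.symm hda.symm hea.symm) hb.symm
          (cyc_fix hcb.symm hdb.symm heb.symm)]
        exact inv_apply_of_eq hb.symm
      have hψb : ψ b = b := by
        rw [hψ, hπ, psi_apply (cyc_fix hcb.symm hdb.symm heb.symm) hba
          (cyc_fix hca.symm hda.symm hea.symm)]
        exact inv_apply_of_eq hba
      have hψfix : ∀ x, x ∉ σ.support → x ≠ e → ψ x = x := by
        intro x hxs hxe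
        have hσx : σ x = x := Equiv.Perm.notMem_support.1 hxs
        have hxc : x ≠ c := fun h => hxs (h ▸ hcmem)
        have hxd : x ≠ d := fun h => hxs (h ▸ hdmem)
        rw [hψ, hπ, psi_apply (cyc_fix hxc hxd hxe) hσx (cyc_fix hxc hxd hxe)]
        exact inv_apply_of_eq hσx
      have hsub : ψ.support ⊆ ((σ.support ∪ {e}).erase a).erase b := by
        intro x hx
        have hxm : ψ x ≠ x := Equiv.Perm.mem_support.1 hx
        rw [Finset.mem_erase, Finset.mem_erase, Finset.mem_union, Finset.mem_singleton]
        refine ⟨fun h => hxm (by rw [h]; exact hψb), fun h => hxm (by rw [h]; exact hψa), ?_⟩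
        by_contra hcon
        push_neg at hcon
        exact hxm (hψfix x hcon.1 hcon.2)
      have hcardψ : ψ.support.card ≤ m := by
        have hm1 : a ∈ σ.support ∪ {e} := Finset.mem_union_left _ ha
        have hm2 : b ∈ (σ.support ∪ {e}).erase a :=
          Finset.mem_erase.2 ⟨hab.symm, Finset.mem_union_left _ hbmem⟩
        have h3 := Finset.card_le_card hsub
        rw [Finset.card_erase_of_mem hm2, Finset.card_erase_of_mem hm1] at h3
        have h4 : (σ.support ∪ {e}).card ≤ σ.support.card + 1 :=
          (Finset.card_union_le _ _).trans (by simp)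
        omega
      exact ih ψ hψK hψs hψne hcardψ
    · -- non-involution case
      push_neg at hinv
      obtain ⟨a, ha2⟩ := hinv
      set b := σ a with hb
      set c := σ b with hc
      have hca : c ≠ a := by rw [hc, hb]; exact ha2
      have hab : a ≠ b := by
        intro h
        apply hca
        have h1 : σ a = a := (h.trans hb).symm
        rw [hc, hb, h1, h1]
      have hbc : b ≠ c := by
        intro h
        have hσb : σ b = b := by rw [hc] at h; exact h.symm
        have hσa : σ a = a := σ.injective (show σ (σ a) = σ a by rw [← hb]; exact hσb)
        exact hca (by rw [hc, hb, hσa, hσa])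
      have hσa_ne : σ a ≠ a := fun h => hab (h ▸ hb : b = a).symm
      have hamem : a ∈ σ.support := Equiv.Perm.mem_support.2 hσa_ne
      have hbmem : b ∈ σ.support := Equiv.Perm.mem_support.2 (fun h => hbc (hc.trans h).symm)
      have hcσ_ne : σ c ≠ c := by
        intro h
        apply hbc
        have h1 : σ (σ b) = σ b := by rw [← hc]; exact h
        exact (hc.trans (σ.injective h1)).symm
      have hcmem : c ∈ σ.support := Equiv.Perm.mem_support.2 hcσ_ne
      have hσcb : σ c ≠ b := fun h => hca (σ.injective (h.trans hb))
      have hcard_abc : ({a, b, c} : Finset α).card ≤ 3 := by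
        have t1 := card_insert_le a ({b, c} : Finset α)
        have t2 := card_insert_le b ({c} : Finset α)
        simp only [card_singleton] at t1 t2
        omega
      by_cases hc4 : σ.support.card = 4
      · -- contradiction: σ would be a 4-cycle, which is odd
        exfalso
        have hsd : 1 ≤ (σ.support \ {a, b, c}).card := by
          have := Finset.le_card_sdiff ({a, b, c} : Finset α) σ.support
          omega
        obtain ⟨f, hf⟩ := Finset.card_pos.1 hsd
        rw [Finset.mem_sdiff] at hf
        have hfmem : f ∈ σ.support := hf.1
        have hfa : f ≠ a := fun h => hf.2 (by simp [h])
        have hfb : f ≠ b := fun h => hf.2 (by simp [h])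
        have hfc : f ≠ c := fun h => hf.2 (by simp [h])
        have hsub2 : ({a, b, c, f} : Finset α) ⊆ σ.support := by
          intro x hx
          simp only [Finset.mem_insert, Finset.mem_singleton] at hx
          rcases hx with rfl | rfl | rfl | rfl
          exacts [hamem, hbmem, hcmem, hfmem]
        have hc4' : ({a, b, c, f} : Finset α).card = 4 := by
          rw [Finset.card_insert_of_notMem (by simp [hab, hca.symm, hfa.symm]),
            Finset.card_insert_of_notMem (by simp [hbc, hfb.symm]),
            Finset.card_insert_of_notMem (by simp [hfc.symm]), Finset.card_singleton]
        have hsuppeq : σ.support = {a, b, c, f} :=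
          (Finset.eq_of_subset_of_card_le hsub2 (by omega)).symm
        have hσc_mem : σ c ∈ σ.support := Equiv.Perm.apply_mem_support.2 hcmem
        rw [hsuppeq] at hσc_mem
        simp only [Finset.mem_insert, Finset.mem_singleton] at hσc_mem
        rcases hσc_mem with hσc_a | hσc_b | hσc_c | hσc_f
        · -- σ c = a: then σ f has nowhere to go
          have hσf_mem : σ f ∈ σ.support := Equiv.Perm.apply_mem_support.2 hfmem
          rw [hsuppeq] at hσf_mem
          simp only [Finset.mem_insert, Finset.mem_singleton] at hσf_mem
          rcases hσf_mem with h' | h' | h' | h'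
          · exact hfc (σ.injective (h'.trans hσc_a.symm))
          · exact hfa (σ.injective (h'.trans hb))
          · exact hfb (σ.injective (h'.trans hc))
          · exact Equiv.Perm.mem_support.1 hfmem h'
        · exact hσcb hσc_b
        · exact hcσ_ne hσc_c
        · -- σ c = f, so σ f = a and σ is the 4-cycle (a b c f)
          have hσf_mem : σ f ∈ σ.support := Equiv.Perm.apply_mem_support.2 hfmem
          rw [hsuppeq] at hσf_mem
          simp only [Finset.mem_insert, Finset.mem_singleton] at hσf_mem
          have hσf_a : σ f = a := by
            rcases hσf_mem with h' | h' | h' | h'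
            · exact h'
            · exact absurd (σ.injective (h'.trans hb)) hfa
            · exact absurd (σ.injective (h'.trans hc)) hfb
            · exact absurd h' (Equiv.Perm.mem_support.1 hfmem)
          have hσeq : σ = Equiv.swap a f * (Equiv.swap a c * Equiv.swap a b) := by
            apply Equiv.ext
            intro x
            by_cases hxs : x ∈ σ.support
            · rw [hsuppeq] at hxs
              simp only [Finset.mem_insert, Finset.mem_singleton] at hxs
              rcases hxs with rfl | rfl | rfl | rfl
              · rw [Equiv.Perm.mul_apply, Equiv.Perm.mul_apply, Equiv.swap_apply_left,
                  Equiv.swap_apply_of_ne_of_ne hab.symm hbc,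
                  Equiv.swap_apply_of_ne_of_ne hab.symm hfb.symm]
              · rw [Equiv.Perm.mul_apply, Equiv.Perm.mul_apply, Equiv.swap_apply_right,
                  Equiv.swap_apply_left]
                rw [Equiv.swap_apply_of_ne_of_ne hca hfc.symm]
              · rw [Equiv.Perm.mul_apply, Equiv.Perm.mul_apply,
                  Equiv.swap_apply_of_ne_of_ne hca hbc.symm, Equiv.swap_apply_right,
                  Equiv.swap_apply_left]
                exact hσc_f
              · rw [Equiv.Perm.mul_apply, Equiv.Perm.mul_apply,
                  Equiv.swap_apply_of_ne_of_ne hfa hfb,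
                  Equiv.swap_apply_of_ne_of_ne hfa hfc, Equiv.swap_apply_right]
                exact hσf_a
            · have hσx : σ x = x := Equiv.Perm.notMem_support.1 hxs
              rw [hsuppeq] at hxs
              simp only [Finset.mem_insert, Finset.mem_singleton, not_or] at hxs
              obtain ⟨hxa, hxb, hxc, hxf⟩ := hxs
              rw [Equiv.Perm.mul_apply, Equiv.Perm.mul_apply,
                Equiv.swap_apply_of_ne_of_ne hxa hxb,
                Equiv.swap_apply_of_ne_of_ne hxa hxc,
                Equiv.swap_apply_of_ne_of_ne hxa hxf]
              exact hσx
          rw [hσeq, map_mul, map_mul, Equiv.Perm.sign_swap hfa.symm,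
            Equiv.Perm.sign_swap hca.symm, Equiv.Perm.sign_swap hab] at hσs
          exact absurd hσs (by decide)
      · -- support has at least 5 elements: shrink
        have h5s : 5 ≤ σ.support.card := by omega
        have hsd : 2 ≤ (σ.support \ {a, b, c}).card := by
          have := Finset.le_card_sdiff ({a, b, c} : Finset α) σ.support
          omega
        obtain ⟨d, hdm⟩ := Finset.card_pos.1 (by omega : 0 < (σ.support \ {a, b, c}).card)
        have hsd2 : 1 ≤ ((σ.support \ {a, b, c}).erase d).card := by
          rw [Finset.card_erase_of_mem hdm]; omega
        obtain ⟨e, hem⟩ := Finset.card_pos.1 hsd2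
        have hed : e ≠ d := (Finset.mem_erase.1 hem).1
        have hem' := (Finset.mem_erase.1 hem).2
        rw [Finset.mem_sdiff] at hdm hem'
        have hdmem : d ∈ σ.support := hdm.1
        have hemem : e ∈ σ.support := hem'.1
        have hda : d ≠ a := fun h => hdm.2 (by simp [h])
        have hdb : d ≠ b := fun h => hdm.2 (by simp [h])
        have hdc : d ≠ c := fun h => hdm.2 (by simp [h])
        have hea : e ≠ a := fun h => hem'.2 (by simp [h])
        have heb : e ≠ b := fun h => hem'.2 (by simp [h])
        have hec : e ≠ c := fun h => hem'.2 (by simp [h])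
        set π := Equiv.swap c e * Equiv.swap c d with hπ
        have hπs : Equiv.Perm.sign π = 1 := by
          rw [hπ]; exact cyc_sign hec.symm hdc.symm
        set ψ := σ⁻¹ * (π * σ * π⁻¹) with hψ
        have hψK : ψ ∈ K := mul_mem (inv_mem hσK) (hK σ hσK π hπs)
        have hψs : Equiv.Perm.sign ψ = 1 := by
          rw [hψ]; simp [map_mul, map_inv, hσs, hπs]
        have hψb_val : ψ b = σ⁻¹ d := by
          rw [hψ, hπ, psi_apply (cyc_fix hbc hdb.symm heb.symm) hc.symm
            (cyc_left hdc hed.symm)]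
        have hψb_ne : ψ b ≠ b := by
          rw [hψb_val]
          intro h
          have hd' : d = σ b := by rw [← Equiv.Perm.apply_inv_self σ d, h]
          exact hdc (hd'.trans hc.symm)
        have hψa : ψ a = a := by
          rw [hψ, hπ, psi_apply (cyc_fix hca.symm hda.symm hea.symm) hb.symm
            (cyc_fix hbc hdb.symm heb.symm)]
          exact inv_apply_of_eq hb.symm
        have hψfix : ∀ x, x ∉ σ.support → ψ x = x := by
          intro x hxs
          have hσx : σ x = x := Equiv.Perm.notMem_support.1 hxs
          have hxc : x ≠ c := fun h => hxs (h ▸ hcmem)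
          have hxd : x ≠ d := fun h => hxs (h ▸ hdmem)
          have hxe : x ≠ e := fun h => hxs (h ▸ hemem)
          rw [hψ, hπ, psi_apply (cyc_fix hxc hxd hxe) hσx (cyc_fix hxc hxd hxe)]
          exact inv_apply_of_eq hσx
        have hψne : ψ ≠ 1 := fun h => hψb_ne (by rw [h]; rfl)
        have hsub : ψ.support ⊆ σ.support.erase a := by
          intro x hx
          have hxm := Equiv.Perm.mem_support.1 hx
          rw [Finset.mem_erase]
          refine ⟨fun h => hxm (by rw [h]; exact hψa), ?_⟩
          by_contra hcon
          exact hxm (hψfix x hcon)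
        have hcardψ : ψ.support.card ≤ m := by
          have h3 := Finset.card_le_card hsub
          rw [Finset.card_erase_of_mem hamem] at h3
          omega
        exact ih ψ hψK hψs hψne hcardψ


private lemma key_lemma {α : Type*} [Fintype α] [DecidableEq α]
    (h5 : 5 ≤ Fintype.card α) (K : Subgroup (Equiv.Perm α))
    (hK : ∀ g ∈ K, ∀ h : Equiv.Perm α, Equiv.Perm.sign h = 1 → h * g * h⁻¹ ∈ K)
    {g0 : Equiv.Perm α} (hg0 : g0 ∈ K) (hg0ne : g0 ≠ 1) :
    ∀ g : Equiv.Perm α, Equiv.Perm.sign g = 1 → g ∈ K := by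
  obtain ⟨a, ha⟩ : ∃ x, g0 x ≠ x := by
    by_contra h
    push_neg at h
    exact hg0ne (Equiv.ext h)
  set b := g0 a with hb
  have hab : a ≠ b := fun h => ha (hb.symm.trans h.symm)
  have hcab : ({a, b} : Finset α).card ≤ 2 := (card_insert_le _ _).trans (by simp)
  have hs3 : 3 ≤ ((univ : Finset α) \ {a, b}).card := by
    have := Finset.card_sdiff_of_subset (Finset.subset_univ ({a, b} : Finset α))
    rw [Finset.card_univ] at this
    omega
  obtain ⟨c, hc⟩ := Finset.card_pos.1 (by omega : 0 < ((univ : Finset α) \ {a, b}).card)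
  obtain ⟨d, hd⟩ := Finset.card_pos.1
    (by rw [Finset.card_erase_of_mem hc]; omega :
      0 < (((univ : Finset α) \ {a, b}).erase c).card)
  obtain ⟨e, he⟩ := Finset.card_pos.1
    (by rw [Finset.card_erase_of_mem hd, Finset.card_erase_of_mem hc]; omega :
      0 < ((((univ : Finset α) \ {a, b}).erase c).erase d).card)
  have hdc : d ≠ c := (Finset.mem_erase.1 hd).1
  have hd' := (Finset.mem_erase.1 hd).2
  have hed : e ≠ d := (Finset.mem_erase.1 he).1
  have he' := (Finset.mem_erase.1 he).2
  have hec : e ≠ c := (Finset.mem_erase.1 he').1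
  have he'' := (Finset.mem_erase.1 he').2
  rw [Finset.mem_sdiff] at hc hd' he''
  have hca : c ≠ a := fun h => hc.2 (by simp [h])
  have hcb : c ≠ b := fun h => hc.2 (by simp [h])
  have hda : d ≠ a := fun h => hd'.2 (by simp [h])
  have hdb : d ≠ b := fun h => hd'.2 (by simp [h])
  have hea : e ≠ a := fun h => he''.2 (by simp [h])
  have heb : e ≠ b := fun h => he''.2 (by simp [h])
  set h1 := Equiv.swap b c * Equiv.swap d e with hh1
  have hsig : Equiv.Perm.sign h1 = 1 := by
    rw [hh1, map_mul, Equiv.Perm.sign_swap hcb.symm, Equiv.Perm.sign_swap hed.symm]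
    decide
  set σ0 := g0⁻¹ * (h1 * g0 * h1⁻¹) with hσ0
  have hσ0K : σ0 ∈ K := mul_mem (inv_mem hg0) (hK g0 hg0 h1 hsig)
  have hσ0s : Equiv.Perm.sign σ0 = 1 := by
    rw [hσ0]
    simp [map_mul, map_inv, hsig]
  have h1a : h1 a = a := by
    rw [hh1, Equiv.Perm.mul_apply, Equiv.swap_apply_of_ne_of_ne hda.symm hea.symm,
      Equiv.swap_apply_of_ne_of_ne hab hca.symm]
  have h1b : h1 b = c := by
    rw [hh1, Equiv.Perm.mul_apply, Equiv.swap_apply_of_ne_of_ne hdb.symm heb.symm,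
      Equiv.swap_apply_left]
  have hσ0a : σ0 a ≠ a := by
    rw [hσ0, psi_apply h1a hb.symm h1b]
    intro h
    have hcb' : c = g0 a := by rw [← Equiv.Perm.apply_inv_self g0 c, h]
    exact hcb (hcb'.trans hb.symm)
  have hσ0ne : σ0 ≠ 1 := fun h => hσ0a (by rw [h]; rfl)
  obtain ⟨t, htK, ht3⟩ := step_lemma h5 K hK σ0.support.card σ0 hσ0K hσ0s hσ0ne le_rfl
  intro g hg
  haveI hM : (K.subgroupOf (alternatingGroup α)).Normal := by
    constructor
    intro x hx y
    rw [Subgroup.mem_subgroupOf] at hx ⊢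
    have := hK x hx y (Equiv.Perm.mem_alternatingGroup.1 y.2)
    simpa using this
  have hNC := ht3.alternating_normalClosure (by rwa [Nat.card_eq_fintype_card])
  have hle : Subgroup.normalClosure {(⟨t, ht3.mem_alternatingGroup⟩ : alternatingGroup α)} ≤
      K.subgroupOf (alternatingGroup α) :=
    Subgroup.normalClosure_le_normal (by
      intro x hx
      rw [Set.mem_singleton_iff] at hx
      subst hx
      rw [SetLike.mem_coe, Subgroup.mem_subgroupOf]
      exact htK)
  have hmem : (⟨g, Equiv.Perm.mem_alternatingGroup.2 hg⟩ : alternatingGroup α) ∈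
      K.subgroupOf (alternatingGroup α) := by
    apply hle
    rw [hNC]
    exact Subgroup.mem_top _
  rwa [Subgroup.mem_subgroupOf] at hmem

/-- Let `A` be an orbit of `H ≤ Sym_n` with `|A| ≥ 5`, and suppose the restriction
`H^A` contains `Alt(A)` (every even permutation supported in `A` arises as the
restriction of some element of `H`). Then either the pointwise stabilizer of the
complement of `A` restricts onto a group containing `Alt(A)`, or the action of any
element of `H` on the complement of `A` determines its action on `A`. -/
theorem alt_orbit_dichotomy {n : ℕ} (H : Subgroup (Equiv.Perm (Fin n)))
    (A : Set (Fin n)) (hA : ∃ a : Fin n, A = {b : Fin n | ∃ σ ∈ H, σ a = b})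
    (hcard : 5 ≤ A.ncard)
    (halt : ∀ τ : Equiv.Perm (Fin n), (∀ a ∉ A, τ a = a) → Equiv.Perm.sign τ = 1 →
      ∃ σ ∈ H, ∀ a ∈ A, σ a = τ a) :
    (∀ τ : Equiv.Perm (Fin n), (∀ a ∉ A, τ a = a) → Equiv.Perm.sign τ = 1 → τ ∈ H) ∨
    (∀ σ ∈ H, ∀ σ' ∈ H, (∀ a ∉ A, σ a = σ' a) → ∀ a ∈ A, σ a = σ' a) := by
  classical
  by_cases h2 : ∀ σ ∈ H, ∀ σ' ∈ H, (∀ a ∉ A, σ a = σ' a) → ∀ a ∈ A, σ a = σ' a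
  · exact Or.inr h2
  left
  obtain ⟨a0, hA0⟩ := hA
  have hpres : ∀ σ ∈ H, ∀ x ∈ A, σ x ∈ A := by
    intro σ hσ x hx
    rw [hA0] at hx ⊢
    obtain ⟨σ1, hσ1, hσ1x⟩ := hx
    exact ⟨σ * σ1, mul_mem hσ hσ1, by rw [Equiv.Perm.mul_apply, hσ1x]⟩
  have hpresC : ∀ σ ∈ H, ∀ x, x ∉ A → σ x ∉ A := by
    intro σ hσ x hx hmem
    exact hx (by
      have := hpres σ⁻¹ (inv_mem hσ) (σ x) hmem
      rwa [Equiv.Perm.inv_apply_self] at this)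
  push_neg at h2
  obtain ⟨σ, hσ, σ', hσ', hagree, a1, ha1, hne⟩ := h2
  set ρ := σ'⁻¹ * σ with hρ
  have hρH : ρ ∈ H := mul_mem (inv_mem hσ') hσ
  have hρfix : ∀ x ∉ A, ρ x = x := by
    intro x hx
    rw [hρ, Equiv.Perm.mul_apply, hagree x hx, Equiv.Perm.inv_apply_self]
  have hρa1 : ρ a1 ≠ a1 := by
    rw [hρ, Equiv.Perm.mul_apply]
    intro h
    apply hne
    have := congrArg σ' h
    rwa [Equiv.Perm.apply_inv_self] at this
  have hcard' : 5 ≤ Fintype.card ↥A := by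
    rw [← Nat.card_eq_fintype_card, Nat.card_coe_set_eq]
    exact hcard
  set K : Subgroup (Equiv.Perm ↥A) :=
    Subgroup.comap (Equiv.Perm.ofSubtype : Equiv.Perm ↥A →* Equiv.Perm (Fin n)) H with hKdef
  -- normalization property
  have hKnorm : ∀ g ∈ K, ∀ h : Equiv.Perm ↥A, Equiv.Perm.sign h = 1 → h * g * h⁻¹ ∈ K := by
    intro g hg h hsign
    have hg' : Equiv.Perm.ofSubtype g ∈ H := hg
    obtain ⟨s, hsH, hsa⟩ := halt (Equiv.Perm.ofSubtype h)
      (fun x hx => Equiv.Perm.ofSubtype_apply_of_not_mem h hx)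
      (by rw [Equiv.Perm.sign_ofSubtype]; exact hsign)
    have hTh_presA : ∀ x (hx : x ∈ A), Equiv.Perm.ofSubtype h x ∈ A := by
      intro x hx
      rw [Equiv.Perm.ofSubtype_apply_of_mem h hx]
      exact (h ⟨x, hx⟩).2
    have hTg_presA : ∀ x (hx : x ∈ A), Equiv.Perm.ofSubtype g x ∈ A := by
      intro x hx
      rw [Equiv.Perm.ofSubtype_apply_of_mem g hx]
      exact (g ⟨x, hx⟩).2
    have heq : Equiv.Perm.ofSubtype (h * g * h⁻¹) = s * Equiv.Perm.ofSubtype g * s⁻¹ := by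
      rw [map_mul, map_mul, map_inv]
      ext x
      by_cases hx : x ∈ A
      · -- y := (ofSubtype h)⁻¹ x ∈ A
        set y := (Equiv.Perm.ofSubtype h)⁻¹ x with hy
        have hyA : y ∈ A := by
          by_contra hyn
          have hfix : Equiv.Perm.ofSubtype h y = y := Equiv.Perm.ofSubtype_apply_of_not_mem h hyn
          have hxy : x = y := by rw [← hfix, hy, Equiv.Perm.apply_inv_self]
          exact hyn (hxy ▸ hx)
        have hsy : s y = Equiv.Perm.ofSubtype h y := hsa y hyA
        have hsx' : s y = x := by rw [hsy, hy, Equiv.Perm.apply_inv_self]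
        have hsinv : s⁻¹ x = y := inv_apply_of_eq hsx'
        have hzA : Equiv.Perm.ofSubtype g y ∈ A := hTg_presA y hyA
        rw [Equiv.Perm.mul_apply, Equiv.Perm.mul_apply, Equiv.Perm.mul_apply,
          Equiv.Perm.mul_apply, hsinv, hy, hsa _ hzA]
      · have hsx : s⁻¹ x ∉ A := hpresC s⁻¹ (inv_mem hsH) x hx
        rw [Equiv.Perm.mul_apply, Equiv.Perm.mul_apply, Equiv.Perm.mul_apply,
          Equiv.Perm.mul_apply]
        have e1 : (Equiv.Perm.ofSubtype h)⁻¹ x = x := by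
          rw [← map_inv]
          exact Equiv.Perm.ofSubtype_apply_of_not_mem h⁻¹ hx
        rw [e1, Equiv.Perm.ofSubtype_apply_of_not_mem g hx,
          Equiv.Perm.ofSubtype_apply_of_not_mem h hx,
          Equiv.Perm.ofSubtype_apply_of_not_mem g hsx, Equiv.Perm.apply_inv_self]
    show Equiv.Perm.ofSubtype (h * g * h⁻¹) ∈ H
    rw [heq]
    exact mul_mem (mul_mem hsH hg') (inv_mem hsH)
  -- the nontrivial element of K
  have hmemiff : ∀ x, ρ x ∈ A ↔ x ∈ A := by
    intro x; rw [Iff.comm]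
    constructor
    · exact fun h => hpres ρ hρH x h
    · intro h
      by_contra hx
      exact hx (hρfix x hx ▸ h)
  have hofρ : Equiv.Perm.ofSubtype (ρ.subtypePerm hmemiff) = ρ :=
    Equiv.Perm.ofSubtype_subtypePerm hmemiff
      (fun x hx => by_contra fun h => hx (hρfix x h))
  have hg0K : ρ.subtypePerm hmemiff ∈ K := by
    show Equiv.Perm.ofSubtype (ρ.subtypePerm hmemiff) ∈ H
    rw [hofρ]
    exact hρH
  have hg0ne : ρ.subtypePerm hmemiff ≠ 1 := by
    intro h
    apply hρa1
    have := congrArg (fun π : Equiv.Perm ↥A => (π ⟨a1, ha1⟩ : Fin n)) h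
    simpa [Equiv.Perm.subtypePerm_apply] using this
  have hall := key_lemma hcard' K hKnorm hg0K hg0ne
  intro τ hτfix hτsign
  have hmemiffτ : ∀ x, τ x ∈ A ↔ x ∈ A := by
    intro x; rw [Iff.comm]
    constructor
    · intro hx
      by_contra hy
      have h1 : τ (τ x) = τ x := hτfix _ hy
      have h2 : τ x = x := τ.injective h1
      exact hy (h2.symm ▸ hx)
    · intro hx
      by_contra hy
      exact hy (hτfix x hy ▸ hx)
  have hofτ : Equiv.Perm.ofSubtype (τ.subtypePerm hmemiffτ) = τ :=
    Equiv.Perm.ofSubtype_subtypePerm hmemiffτ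
      (fun x hx => by_contra fun h => hx (hτfix x h))
  have hsignτ : Equiv.Perm.sign (τ.subtypePerm hmemiffτ) = 1 := by
    rw [← Equiv.Perm.sign_ofSubtype, hofτ]
    exact hτsign
  have := hall _ hsignτ
  have hfinal : Equiv.Perm.ofSubtype (τ.subtypePerm hmemiffτ) ∈ H := this
  rwa [hofτ] at hfinal
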